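/- Propagation of the integrability condition (Lemma 2.1). Let p_t(z) := (2πt)^{−1/2} e^{−z²/(2t)}. Suppose u : [0,∞) × ℝ → [0,∞) is such that u(0,·) is bounded and measurable with ∫_0^∞ y e^{√2 y} u(0,y) dy < ∞, and suppose that for all t > 0 and x ∈ ℝ the Feynman–Kac domination u(t,x) ≤ e^t ∫_ℝ u(0,z) p_t(x − z) dz holds (as is the case for solutions of the KPP equation, since −ψ(λ)/λ ≤ 1). Then for every t > 0 one has ∫_0^∞ y e^{√2 y} u(t,y) dy < ∞, and also ∫_0^∞ u(t, √2 t + y) y e^{√2 y} dy < ∞. -/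

import Mathlib

open MeasureTheory Set Filter Topology

/-- The centered Gaussian density with variance t: p_t(z) = (2πt)^{−1/2} e^{−z²/(2t)}. -/
noncomputable def gaussDensity (t z : ℝ) : ℝ :=
  (Real.sqrt (2 * Real.pi * t))⁻¹ * Real.exp (-z ^ 2 / (2 * t))

open ENNReal

lemma gaussDensity_nonneg (t z : ℝ) : 0 ≤ gaussDensity t z := by
  unfold gaussDensity; positivity

lemma continuous_gaussDensity (t : ℝ) : Continuous (gaussDensity t) := by
  unfold gaussDensity; fun_prop

lemma gaussAux (t : ℝ) (ht : 0 < t) (k : ℝ) (hk : 0 ≤ k) :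
    Integrable (fun w : ℝ =>
      (|w| + k) * Real.exp (Real.sqrt 2 * |w|) * gaussDensity t w) := by
  set c : ℝ := (Real.sqrt (2 * Real.pi * t))⁻¹ with hc
  have hc0 : 0 ≤ c := by positivity
  set s : ℝ := Real.sqrt 2 with hs
  have hs0 : 0 ≤ s := Real.sqrt_nonneg 2
  set D : ℝ := c * (1 + k) * Real.exp ((1 + s) ^ 2 * t) with hD
  have key : ∀ w : ℝ, (|w| + k) * Real.exp (s * |w|) * gaussDensity t w ≤
      D * Real.exp (-(1 / (4 * t)) * w ^ 2) := by
    intro w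
    set m : ℝ := |w| with hm
    have hm0 : 0 ≤ m := abs_nonneg w
    have h1 : m + k ≤ (1 + k) * Real.exp m := by
      have e1 : m + 1 ≤ Real.exp m := Real.add_one_le_exp m
      have e2 : (1:ℝ) ≤ Real.exp m := by
        calc (1:ℝ) ≤ m + 1 := by linarith
        _ ≤ Real.exp m := e1
      nlinarith
    have hgd : gaussDensity t w = c * Real.exp (-w ^ 2 / (2 * t)) := rfl
    have hexp : Real.exp m * Real.exp (s * m) * Real.exp (-w ^ 2 / (2 * t)) ≤
        Real.exp ((1 + s) ^ 2 * t) * Real.exp (-(1 / (4 * t)) * w ^ 2) := by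
      rw [← Real.exp_add, ← Real.exp_add, ← Real.exp_add]
      apply Real.exp_le_exp.2
      have hw2 : w ^ 2 = m ^ 2 := (sq_abs w).symm
      rw [hw2]
      have hsq : 0 ≤ (m - 2 * (1 + s) * t) ^ 2 := sq_nonneg _
      have h4t : (0:ℝ) < 4 * t := by linarith
      have expand : (m + s * m + -m ^ 2 / (2 * t)) - ((1 + s) ^ 2 * t + -(1 / (4 * t)) * m ^ 2)
          = -((m - 2 * (1 + s) * t) ^ 2) / (4 * t) := by
        field_simp
        ring
      have hneg : -(m - 2 * (1 + s) * t) ^ 2 / (4 * t) ≤ 0 :=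
        div_nonpos_of_nonpos_of_nonneg (neg_nonpos.2 hsq) (le_of_lt h4t)
      linarith
    have step : (m + k) * Real.exp (s * m) * gaussDensity t w ≤
        ((1 + k) * Real.exp m) * Real.exp (s * m) * (c * Real.exp (-w ^ 2 / (2 * t))) := by
      rw [hgd]
      have := mul_le_mul_of_nonneg_right h1 (le_of_lt (Real.exp_pos (s * m)))
      exact mul_le_mul_of_nonneg_right this (by positivity)
    calc (m + k) * Real.exp (s * m) * gaussDensity t w
        ≤ ((1 + k) * Real.exp m) * Real.exp (s * m) * (c * Real.exp (-w ^ 2 / (2 * t))) := step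
      _ = c * (1 + k) * (Real.exp m * Real.exp (s * m) * Real.exp (-w ^ 2 / (2 * t))) := by ring
      _ ≤ c * (1 + k) * (Real.exp ((1 + s) ^ 2 * t) * Real.exp (-(1 / (4 * t)) * w ^ 2)) := by
          apply mul_le_mul_of_nonneg_left hexp (by positivity)
      _ = D * Real.exp (-(1 / (4 * t)) * w ^ 2) := by rw [hD]; ring
  have hintD : Integrable (fun w : ℝ => D * Real.exp (-(1 / (4 * t)) * w ^ 2)) :=
    (integrable_exp_neg_mul_sq (by positivity : (0:ℝ) < 1 / (4 * t))).const_mul D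
  apply hintD.mono'
  · apply Continuous.aestronglyMeasurable
    have := continuous_gaussDensity t
    fun_prop
  · filter_upwards with w
    rw [Real.norm_eq_abs, abs_of_nonneg (mul_nonneg (mul_nonneg
      (by positivity) (Real.exp_nonneg _)) (gaussDensity_nonneg t w))]
    exact key w

lemma one_lt_sqrt_two : (1:ℝ) < Real.sqrt 2 := by
  have h : (1:ℝ) < 2 := one_lt_two
  calc (1:ℝ) = Real.sqrt 1 := (Real.sqrt_one).symm
  _ < Real.sqrt 2 := Real.sqrt_lt_sqrt zero_le_one h

lemma lintIic : ∫⁻ z in Iic (0:ℝ),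
    ENNReal.ofReal ((1 + |z|) * Real.exp (Real.sqrt 2 * z)) < ⊤ := by
  set b : ℝ := Real.sqrt 2 - 1 with hb
  have hb0 : 0 < b := by have := one_lt_sqrt_two; simp [hb]; linarith
  set K : ℝ := 1 + 1 / b with hK
  have hint : IntegrableOn (fun z : ℝ => K * Real.exp z) (Iic (0:ℝ)) :=
    (integrableOn_exp_Iic 0).const_mul K
  have hmono : IntegrableOn (fun z : ℝ => (1 + |z|) * Real.exp (Real.sqrt 2 * z))
      (Iic (0:ℝ)) := by
    apply hint.mono'
    · apply Continuous.aestronglyMeasurable; fun_prop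
    · rw [ae_restrict_iff' measurableSet_Iic]
      filter_upwards with z hz
      rw [Real.norm_eq_abs,
        abs_of_nonneg (mul_nonneg (by positivity) (Real.exp_nonneg _))]
      have hz0 : z ≤ 0 := hz
      have habs : |z| = -z := abs_of_nonpos hz0
      have key : 1 + |z| ≤ K * Real.exp (b * (-z)) := by
        rw [habs]
        have e1 : b * (-z) + 1 ≤ Real.exp (b * (-z)) := Real.add_one_le_exp _
        have e2 : (0:ℝ) ≤ b * (-z) := mul_nonneg hb0.le (by linarith)
        have e3 : (1:ℝ) ≤ Real.exp (b * (-z)) := by linarith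
        have hKb : K = 1 + 1 / b := hK
        rw [hKb]
        have : -z ≤ Real.exp (b * (-z)) / b := by
          rw [le_div_iff₀ hb0]; nlinarith
        calc 1 + -z ≤ Real.exp (b * (-z)) + Real.exp (b * (-z)) / b := by linarith
        _ = (1 + 1 / b) * Real.exp (b * (-z)) := by field_simp
      calc (1 + |z|) * Real.exp (Real.sqrt 2 * z)
          ≤ (K * Real.exp (b * (-z))) * Real.exp (Real.sqrt 2 * z) :=
            mul_le_mul_of_nonneg_right key (Real.exp_nonneg _)
        _ = K * Real.exp z := by
            rw [mul_assoc, ← Real.exp_add]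
            congr 1
            rw [hb]; ring
  exact hmono.lintegral_lt_top

lemma lint_translate (f : ℝ → ℝ≥0∞) (c : ℝ) :
    ∫⁻ y in Ioi (0:ℝ), f (c + y) = ∫⁻ y in Ioi c, f y := by
  rw [← lintegral_indicator measurableSet_Ioi, ← lintegral_indicator measurableSet_Ioi]
  have h : ∀ y : ℝ, (Ioi (0:ℝ)).indicator (fun y => f (c + y)) y
      = (Ioi c).indicator f (c + y) := by
    intro y
    by_cases hy : 0 < y
    · rw [indicator_of_mem (mem_Ioi.2 hy), indicator_of_mem]
      exact mem_Ioi.2 (by linarith)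
    · rw [indicator_of_notMem (by simpa using hy), indicator_of_notMem]
      simp only [mem_Ioi, not_lt] at *
      linarith
  calc ∫⁻ y, (Ioi (0:ℝ)).indicator (fun y => f (c + y)) y
      = ∫⁻ y, (Ioi c).indicator f (c + y) := by exact lintegral_congr h
    _ = ∫⁻ y, (Ioi c).indicator f y := lintegral_add_left_eq_self _ c

/-- Propagation of the integrability condition (Lemma 2.1): if u ≥ 0, u(0,·) is bounded
measurable with ∫₀^∞ y e^{√2 y} u(0,y) dy < ∞, and u(t,x) ≤ e^t ∫ u(0,z) p_t(x−z) dz for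
all t > 0 and x, then for every t > 0, ∫₀^∞ y e^{√2 y} u(t,y) dy < ∞ and
∫₀^∞ u(t, √2 t + y) y e^{√2 y} dy < ∞. -/
theorem integrability_propagation
    (u : ℝ → ℝ → ℝ)
    (hpos : ∀ t : ℝ, 0 ≤ t → ∀ x : ℝ, 0 ≤ u t x)
    (hmeas : Measurable (u 0))
    (hbdd : ∃ C : ℝ, ∀ x : ℝ, u 0 x ≤ C)
    (hint : ∫⁻ y in Ioi (0 : ℝ),
      ENNReal.ofReal (y * Real.exp (Real.sqrt 2 * y) * u 0 y) < ⊤)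
    (hdom : ∀ t : ℝ, 0 < t → ∀ x : ℝ,
      u t x ≤ Real.exp t * ∫ z : ℝ, u 0 z * gaussDensity t (x - z)) :
    ∀ t : ℝ, 0 < t →
      (∫⁻ y in Ioi (0 : ℝ),
        ENNReal.ofReal (y * Real.exp (Real.sqrt 2 * y) * u t y) < ⊤) ∧
      (∫⁻ y in Ioi (0 : ℝ),
        ENNReal.ofReal (u t (Real.sqrt 2 * t + y) * (y * Real.exp (Real.sqrt 2 * y))) < ⊤) := by
  obtain ⟨C₀, hC₀⟩ := hbdd
  set C : ℝ := max C₀ 0 with hCdef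
  have hC : ∀ x : ℝ, u 0 x ≤ C := fun x => le_trans (hC₀ x) (le_max_left _ _)
  have hCnn : 0 ≤ C := le_max_right _ _
  have hs0 : (0:ℝ) ≤ Real.sqrt 2 := Real.sqrt_nonneg 2
  intro t ht
  set g : ℝ → ℝ := gaussDensity t with hgdef
  have hgm : Measurable g := (continuous_gaussDensity t).measurable
  have hgnn : ∀ w, 0 ≤ g w := gaussDensity_nonneg t
  -- the two Gaussian moment integrals
  set φ1 : ℝ → ℝ≥0∞ :=
    fun w => ENNReal.ofReal (|w| * Real.exp (Real.sqrt 2 * |w|) * g w) with hφ1def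
  set φ2 : ℝ → ℝ≥0∞ :=
    fun w => ENNReal.ofReal (Real.exp (Real.sqrt 2 * |w|) * g w) with hφ2def
  have hφ1m : Measurable φ1 := by
    apply Measurable.ennreal_ofReal
    fun_prop
  have hφ2m : Measurable φ2 := by
    apply Measurable.ennreal_ofReal
    fun_prop
  set A : ℝ≥0∞ := ∫⁻ w, φ1 w with hAdef
  set B : ℝ≥0∞ := ∫⁻ w, φ2 w with hBdef
  have hA : A < ⊤ := by
    have h := (gaussAux t ht 0 le_rfl).lintegral_lt_top
    have : A = ∫⁻ w, ENNReal.ofReal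
        ((|w| + 0) * Real.exp (Real.sqrt 2 * |w|) * gaussDensity t w) := by
      simp [hAdef, hφ1def, hgdef]
    rw [this]; exact h
  have hB : B < ⊤ := by
    have h := (gaussAux t ht 1 zero_le_one).lintegral_lt_top
    refine lt_of_le_of_lt ?_ h
    apply lintegral_mono
    intro w
    apply ENNReal.ofReal_le_ofReal
    have h1 : (1:ℝ) ≤ |w| + 1 := by have := abs_nonneg w; linarith
    have : Real.exp (Real.sqrt 2 * |w|) * g w
        = 1 * (Real.exp (Real.sqrt 2 * |w|) * gaussDensity t w) := by
      rw [one_mul, hgdef]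
    rw [this]
    calc 1 * (Real.exp (Real.sqrt 2 * |w|) * gaussDensity t w)
        ≤ (|w| + 1) * (Real.exp (Real.sqrt 2 * |w|) * gaussDensity t w) := by
          apply mul_le_mul_of_nonneg_right h1
          exact mul_nonneg (Real.exp_nonneg _) (gaussDensity_nonneg t w)
      _ = (|w| + 1) * Real.exp (Real.sqrt 2 * |w|) * gaussDensity t w := by ring
  -- the double-integral kernel
  set F : ℝ → ℝ → ℝ≥0∞ := fun y z =>
    ENNReal.ofReal (y * Real.exp (Real.sqrt 2 * y)) *
      ENNReal.ofReal (u 0 z * g (y - z)) with hFdef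
  have hFm : Measurable (Function.uncurry F) := by
    apply Measurable.mul (f := fun p : ℝ × ℝ => ENNReal.ofReal (p.1 * Real.exp (Real.sqrt 2 * p.1)))
      (g := fun p : ℝ × ℝ => ENNReal.ofReal (u 0 p.2 * g (p.1 - p.2)))
    · apply Measurable.ennreal_ofReal
      fun_prop
    · apply Measurable.ennreal_ofReal
      exact (hmeas.comp measurable_snd).mul
        (hgm.comp (measurable_fst.sub measurable_snd))
  -- Step 1: domination by the double integral
  have step1 : (∫⁻ y in Ioi (0:ℝ),
      ENNReal.ofReal (y * Real.exp (Real.sqrt 2 * y) * u t y)) ≤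
      ENNReal.ofReal (Real.exp t) * ∫⁻ y in Ioi (0:ℝ), ∫⁻ z, F y z := by
    rw [← lintegral_const_mul' _ _ ENNReal.ofReal_ne_top]
    apply setLIntegral_mono' measurableSet_Ioi
    intro y hy
    have hy0 : (0:ℝ) < y := hy
    have hyen : (0:ℝ) ≤ y * Real.exp (Real.sqrt 2 * y) := by positivity
    have hInt : ENNReal.ofReal (∫ z : ℝ, u 0 z * g (y - z)) ≤
        ∫⁻ z : ℝ, ENNReal.ofReal (u 0 z * g (y - z)) := by
      by_cases hI : Integrable (fun z : ℝ => u 0 z * g (y - z))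
      · rw [ofReal_integral_eq_lintegral_ofReal hI
          (Eventually.of_forall fun z => mul_nonneg (hpos 0 le_rfl z) (hgnn _))]
      · rw [integral_undef hI]; simp
    calc ENNReal.ofReal (y * Real.exp (Real.sqrt 2 * y) * u t y)
        ≤ ENNReal.ofReal (y * Real.exp (Real.sqrt 2 * y) *
            (Real.exp t * ∫ z : ℝ, u 0 z * g (y - z))) := by
          apply ENNReal.ofReal_le_ofReal
          exact mul_le_mul_of_nonneg_left (hdom t ht y) hyen
      _ = ENNReal.ofReal (Real.exp t) * (ENNReal.ofReal (y * Real.exp (Real.sqrt 2 * y)) *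
            ENNReal.ofReal (∫ z : ℝ, u 0 z * g (y - z))) := by
          rw [show y * Real.exp (Real.sqrt 2 * y) * (Real.exp t * ∫ z : ℝ, u 0 z * g (y - z))
              = Real.exp t * (y * Real.exp (Real.sqrt 2 * y) *
                ∫ z : ℝ, u 0 z * g (y - z)) by ring,
            ENNReal.ofReal_mul (Real.exp_nonneg t), ENNReal.ofReal_mul hyen]
      _ ≤ ENNReal.ofReal (Real.exp t) * (ENNReal.ofReal (y * Real.exp (Real.sqrt 2 * y)) *
            ∫⁻ z : ℝ, ENNReal.ofReal (u 0 z * g (y - z))) := by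
          gcongr
      _ = ENNReal.ofReal (Real.exp t) * ∫⁻ z, F y z := by
          rw [← lintegral_const_mul' _ _ ENNReal.ofReal_ne_top]
  -- Step 2: Tonelli
  have swap : (∫⁻ y in Ioi (0:ℝ), ∫⁻ z, F y z) = ∫⁻ z, ∫⁻ y in Ioi (0:ℝ), F y z :=
    lintegral_lintegral_swap hFm.aemeasurable
  -- Step 3: inner bound
  have inner : ∀ z : ℝ, (∫⁻ y in Ioi (0:ℝ), F y z) ≤
      ENNReal.ofReal (u 0 z) * (ENNReal.ofReal (Real.exp (Real.sqrt 2 * z)) *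
        (A + ENNReal.ofReal |z| * B)) := by
    intro z
    have hu0 : 0 ≤ u 0 z := hpos 0 le_rfl z
    calc (∫⁻ y in Ioi (0:ℝ), F y z)
        ≤ ∫⁻ y in Ioi (0:ℝ), ENNReal.ofReal (u 0 z) *
            (ENNReal.ofReal (Real.exp (Real.sqrt 2 * z)) *
              (φ1 (y - z) + ENNReal.ofReal |z| * φ2 (y - z))) := by
          apply setLIntegral_mono' measurableSet_Ioi
          intro y hy
          have hy0 : (0:ℝ) < y := hy
          have hyen : (0:ℝ) ≤ y * Real.exp (Real.sqrt 2 * y) := by positivity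
          have hcomb : F y z = ENNReal.ofReal
              (y * Real.exp (Real.sqrt 2 * y) * (u 0 z * g (y - z))) := by
            simp only [hFdef]
            rw [← ENNReal.ofReal_mul hyen]
          rw [hcomb]
          have hreal : y * Real.exp (Real.sqrt 2 * y) * (u 0 z * g (y - z)) ≤
              u 0 z * (Real.exp (Real.sqrt 2 * z) *
                ((|y - z| * Real.exp (Real.sqrt 2 * |y - z|) * g (y - z)) +
                  |z| * (Real.exp (Real.sqrt 2 * |y - z|) * g (y - z)))) := by
            have hyle : y ≤ |y - z| + |z| := by
              have h1 : y - z ≤ |y - z| := le_abs_self _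
              have h2 : z ≤ |z| := le_abs_self _
              linarith
            have hexple : Real.exp (Real.sqrt 2 * y) ≤
                Real.exp (Real.sqrt 2 * z) * Real.exp (Real.sqrt 2 * |y - z|) := by
              rw [← Real.exp_add]
              apply Real.exp_le_exp.2
              have : y - z ≤ |y - z| := le_abs_self _
              nlinarith
            have e1 : y * Real.exp (Real.sqrt 2 * y) ≤
                (|y - z| + |z|) * (Real.exp (Real.sqrt 2 * z) *
                  Real.exp (Real.sqrt 2 * |y - z|)) := by
              apply mul_le_mul hyle hexple (Real.exp_nonneg _)
              have := abs_nonneg (y - z); have := abs_nonneg z; linarith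
            have e2 := mul_le_mul_of_nonneg_right e1 (mul_nonneg hu0 (hgnn (y - z)))
            calc y * Real.exp (Real.sqrt 2 * y) * (u 0 z * g (y - z))
                ≤ (|y - z| + |z|) * (Real.exp (Real.sqrt 2 * z) *
                    Real.exp (Real.sqrt 2 * |y - z|)) * (u 0 z * g (y - z)) := e2
              _ = u 0 z * (Real.exp (Real.sqrt 2 * z) *
                  ((|y - z| * Real.exp (Real.sqrt 2 * |y - z|) * g (y - z)) +
                    |z| * (Real.exp (Real.sqrt 2 * |y - z|) * g (y - z)))) := by ring
          calc ENNReal.ofReal (y * Real.exp (Real.sqrt 2 * y) * (u 0 z * g (y - z)))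
              ≤ ENNReal.ofReal (u 0 z * (Real.exp (Real.sqrt 2 * z) *
                  ((|y - z| * Real.exp (Real.sqrt 2 * |y - z|) * g (y - z)) +
                    |z| * (Real.exp (Real.sqrt 2 * |y - z|) * g (y - z))))) :=
                ENNReal.ofReal_le_ofReal hreal
            _ = ENNReal.ofReal (u 0 z) * (ENNReal.ofReal (Real.exp (Real.sqrt 2 * z)) *
                  (φ1 (y - z) + ENNReal.ofReal |z| * φ2 (y - z))) := by
                rw [ENNReal.ofReal_mul hu0, ENNReal.ofReal_mul (Real.exp_nonneg _),
                  ENNReal.ofReal_add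
                    (mul_nonneg (mul_nonneg (abs_nonneg _) (Real.exp_nonneg _)) (hgnn _))
                    (mul_nonneg (abs_nonneg _) (mul_nonneg (Real.exp_nonneg _) (hgnn _))),
                  ENNReal.ofReal_mul (abs_nonneg z)]
      _ ≤ ∫⁻ y : ℝ, ENNReal.ofReal (u 0 z) *
            (ENNReal.ofReal (Real.exp (Real.sqrt 2 * z)) *
              (φ1 (y - z) + ENNReal.ofReal |z| * φ2 (y - z))) :=
          setLIntegral_le_lintegral _ _
      _ = ENNReal.ofReal (u 0 z) * (ENNReal.ofReal (Real.exp (Real.sqrt 2 * z)) *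
            ((∫⁻ y : ℝ, φ1 (y - z)) + ENNReal.ofReal |z| * ∫⁻ y : ℝ, φ2 (y - z))) := by
          rw [lintegral_const_mul' _ _ ENNReal.ofReal_ne_top,
            lintegral_const_mul' _ _ ENNReal.ofReal_ne_top,
            lintegral_add_left
              (show Measurable fun y : ℝ => φ1 (y - z) from
                hφ1m.comp (measurable_sub_const z)),
            lintegral_const_mul' _ _ ENNReal.ofReal_ne_top]
      _ = ENNReal.ofReal (u 0 z) * (ENNReal.ofReal (Real.exp (Real.sqrt 2 * z)) *
            (A + ENNReal.ofReal |z| * B)) := by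
          rw [lintegral_sub_right_eq_self φ1 z, lintegral_sub_right_eq_self φ2 z]
  -- Step 4: the z-integral is finite
  set S : ℝ≥0∞ := ∫⁻ z : ℝ,
    ENNReal.ofReal (u 0 z * Real.exp (Real.sqrt 2 * z) * (1 + |z|)) with hSdef
  have hS : S < ⊤ := by
    have hsplit : S = (∫⁻ z in Iic (0:ℝ),
        ENNReal.ofReal (u 0 z * Real.exp (Real.sqrt 2 * z) * (1 + |z|))) +
        ∫⁻ z in Ioi (0:ℝ),
        ENNReal.ofReal (u 0 z * Real.exp (Real.sqrt 2 * z) * (1 + |z|)) := by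
      rw [hSdef, ← lintegral_add_compl _ measurableSet_Iic, compl_Iic]
    rw [hsplit]
    apply ENNReal.add_lt_top.2
    constructor
    · -- Iic part
      have hbound : (∫⁻ z in Iic (0:ℝ),
          ENNReal.ofReal (u 0 z * Real.exp (Real.sqrt 2 * z) * (1 + |z|))) ≤
          ENNReal.ofReal C * ∫⁻ z in Iic (0:ℝ),
            ENNReal.ofReal ((1 + |z|) * Real.exp (Real.sqrt 2 * z)) := by
        rw [← lintegral_const_mul' _ _ ENNReal.ofReal_ne_top]
        apply setLIntegral_mono' measurableSet_Iic
        intro z _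
        rw [← ENNReal.ofReal_mul hCnn]
        apply ENNReal.ofReal_le_ofReal
        have h1 : 0 ≤ Real.exp (Real.sqrt 2 * z) * (1 + |z|) := by positivity
        calc u 0 z * Real.exp (Real.sqrt 2 * z) * (1 + |z|)
            = u 0 z * (Real.exp (Real.sqrt 2 * z) * (1 + |z|)) := by ring
          _ ≤ C * (Real.exp (Real.sqrt 2 * z) * (1 + |z|)) :=
              mul_le_mul_of_nonneg_right (hC z) h1
          _ = C * ((1 + |z|) * Real.exp (Real.sqrt 2 * z)) := by ring
      exact lt_of_le_of_lt hbound
        (ENNReal.mul_lt_top ENNReal.ofReal_lt_top lintIic)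
    · -- Ioi part
      have hsplit2 : (∫⁻ z in Ioi (0:ℝ),
          ENNReal.ofReal (u 0 z * Real.exp (Real.sqrt 2 * z) * (1 + |z|))) ≤
          (∫⁻ z in Ioc (0:ℝ) 1,
            ENNReal.ofReal (u 0 z * Real.exp (Real.sqrt 2 * z) * (1 + |z|))) +
          ∫⁻ z in Ioi (1:ℝ),
            ENNReal.ofReal (u 0 z * Real.exp (Real.sqrt 2 * z) * (1 + |z|)) := by
        rw [← Ioc_union_Ioi_eq_Ioi (zero_le_one (α := ℝ))]
        exact lintegral_union_le _ _ _
      refine lt_of_le_of_lt hsplit2 (ENNReal.add_lt_top.2 ⟨?_, ?_⟩)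
      · -- Ioc 0 1
        have hb : (∫⁻ z in Ioc (0:ℝ) 1,
            ENNReal.ofReal (u 0 z * Real.exp (Real.sqrt 2 * z) * (1 + |z|))) ≤
            ENNReal.ofReal (C * Real.exp (Real.sqrt 2) * 2) * volume (Ioc (0:ℝ) 1) := by
          rw [← setLIntegral_const]
          apply setLIntegral_mono' measurableSet_Ioc
          intro z hz
          apply ENNReal.ofReal_le_ofReal
          obtain ⟨hz0, hz1⟩ := hz
          have habs : |z| = z := abs_of_pos hz0
          have hexp : Real.exp (Real.sqrt 2 * z) ≤ Real.exp (Real.sqrt 2) := by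
            apply Real.exp_le_exp.2; nlinarith
          have h2 : 1 + |z| ≤ 2 := by rw [habs]; linarith
          have hu0 : 0 ≤ u 0 z := hpos 0 le_rfl z
          have hfin : u 0 z * Real.exp (Real.sqrt 2 * z) * (1 + |z|)
              ≤ C * Real.exp (Real.sqrt 2) * 2 := by
            apply mul_le_mul _ h2 (by positivity) (mul_nonneg hCnn (Real.exp_nonneg _))
            exact mul_le_mul (hC z) hexp (Real.exp_nonneg _) hCnn
          exact hfin
        refine lt_of_le_of_lt hb (ENNReal.mul_lt_top ENNReal.ofReal_lt_top ?_)
        rw [Real.volume_Ioc]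
        exact ENNReal.ofReal_lt_top
      · -- Ioi 1
        have hb : (∫⁻ z in Ioi (1:ℝ),
            ENNReal.ofReal (u 0 z * Real.exp (Real.sqrt 2 * z) * (1 + |z|))) ≤
            ENNReal.ofReal 2 * ∫⁻ z in Ioi (0:ℝ),
              ENNReal.ofReal (z * Real.exp (Real.sqrt 2 * z) * u 0 z) := by
          calc (∫⁻ z in Ioi (1:ℝ),
              ENNReal.ofReal (u 0 z * Real.exp (Real.sqrt 2 * z) * (1 + |z|))) ≤
              ∫⁻ z in Ioi (1:ℝ),
                ENNReal.ofReal 2 * ENNReal.ofReal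
                  (z * Real.exp (Real.sqrt 2 * z) * u 0 z) := by
                apply setLIntegral_mono' measurableSet_Ioi
                intro z hz
                have hz1 : (1:ℝ) < z := hz
                rw [← ENNReal.ofReal_mul (by norm_num : (0:ℝ) ≤ 2)]
                apply ENNReal.ofReal_le_ofReal
                have habs : |z| = z := abs_of_pos (by linarith)
                have h2 : 1 + |z| ≤ 2 * z := by rw [habs]; linarith
                have hu0 : 0 ≤ u 0 z := hpos 0 le_rfl z
                nlinarith [mul_le_mul_of_nonneg_left h2
                  (mul_nonneg hu0 (Real.exp_nonneg (Real.sqrt 2 * z)))]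
            _ = ENNReal.ofReal 2 * ∫⁻ z in Ioi (1:ℝ),
                  ENNReal.ofReal (z * Real.exp (Real.sqrt 2 * z) * u 0 z) := by
                rw [lintegral_const_mul' _ _ ENNReal.ofReal_ne_top]
            _ ≤ ENNReal.ofReal 2 * ∫⁻ z in Ioi (0:ℝ),
                  ENNReal.ofReal (z * Real.exp (Real.sqrt 2 * z) * u 0 z) := by
                gcongr
                norm_num
        exact lt_of_le_of_lt hb (ENNReal.mul_lt_top ENNReal.ofReal_lt_top hint)
  -- assemble part 1
  set D : ℝ≥0∞ := A + B with hDdef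
  have hD : D < ⊤ := ENNReal.add_lt_top.2 ⟨hA, hB⟩
  have hzbound : ∀ z : ℝ, ENNReal.ofReal (u 0 z) *
      (ENNReal.ofReal (Real.exp (Real.sqrt 2 * z)) * (A + ENNReal.ofReal |z| * B)) ≤
      D * ENNReal.ofReal (u 0 z * Real.exp (Real.sqrt 2 * z) * (1 + |z|)) := by
    intro z
    have hu0 : 0 ≤ u 0 z := hpos 0 le_rfl z
    have h1 : A + ENNReal.ofReal |z| * B ≤ D * ENNReal.ofReal (1 + |z|) := by
      rw [ENNReal.ofReal_add zero_le_one (abs_nonneg z), ENNReal.ofReal_one,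
        mul_add, mul_one]
      apply add_le_add (self_le_add_right A B)
      rw [mul_comm]
      exact mul_le_mul_left (self_le_add_left B A) _
    calc ENNReal.ofReal (u 0 z) *
        (ENNReal.ofReal (Real.exp (Real.sqrt 2 * z)) * (A + ENNReal.ofReal |z| * B))
        ≤ ENNReal.ofReal (u 0 z) * (ENNReal.ofReal (Real.exp (Real.sqrt 2 * z)) *
            (D * ENNReal.ofReal (1 + |z|))) := by gcongr
      _ = D * ENNReal.ofReal (u 0 z * Real.exp (Real.sqrt 2 * z) * (1 + |z|)) := by
          rw [ENNReal.ofReal_mul (mul_nonneg hu0 (Real.exp_nonneg _)),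
            ENNReal.ofReal_mul hu0]
          ring
  have main1 : (∫⁻ y in Ioi (0:ℝ),
      ENNReal.ofReal (y * Real.exp (Real.sqrt 2 * y) * u t y)) < ⊤ := by
    refine lt_of_le_of_lt step1 ?_
    rw [swap]
    refine ENNReal.mul_lt_top ENNReal.ofReal_lt_top ?_
    calc (∫⁻ z, ∫⁻ y in Ioi (0:ℝ), F y z)
        ≤ ∫⁻ z : ℝ, ENNReal.ofReal (u 0 z) *
            (ENNReal.ofReal (Real.exp (Real.sqrt 2 * z)) *
              (A + ENNReal.ofReal |z| * B)) := lintegral_mono inner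
      _ ≤ ∫⁻ z : ℝ, D * ENNReal.ofReal
            (u 0 z * Real.exp (Real.sqrt 2 * z) * (1 + |z|)) := lintegral_mono hzbound
      _ = D * S := lintegral_const_mul' _ _ hD.ne
      _ < ⊤ := ENNReal.mul_lt_top hD hS
  refine ⟨main1, ?_⟩
  set f : ℝ → ℝ≥0∞ :=
    fun x => ENNReal.ofReal (x * Real.exp (Real.sqrt 2 * x) * u t x) with hfdef
  calc (∫⁻ y in Ioi (0:ℝ),
      ENNReal.ofReal (u t (Real.sqrt 2 * t + y) * (y * Real.exp (Real.sqrt 2 * y))))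
      ≤ ∫⁻ y in Ioi (0:ℝ), f (Real.sqrt 2 * t + y) := by
        apply setLIntegral_mono' measurableSet_Ioi
        intro y hy
        have hy0 : (0:ℝ) < y := hy
        apply ENNReal.ofReal_le_ofReal
        have hut : 0 ≤ u t (Real.sqrt 2 * t + y) := hpos t ht.le _
        have h1 : y ≤ Real.sqrt 2 * t + y := by nlinarith
        have h2 : Real.exp (Real.sqrt 2 * y) ≤
            Real.exp (Real.sqrt 2 * (Real.sqrt 2 * t + y)) :=
          Real.exp_le_exp.2 (by nlinarith)
        calc u t (Real.sqrt 2 * t + y) * (y * Real.exp (Real.sqrt 2 * y))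
            ≤ u t (Real.sqrt 2 * t + y) * ((Real.sqrt 2 * t + y) *
                Real.exp (Real.sqrt 2 * (Real.sqrt 2 * t + y))) :=
              mul_le_mul_of_nonneg_left
                (mul_le_mul h1 h2 (Real.exp_nonneg _) (by linarith)) hut
          _ = (Real.sqrt 2 * t + y) * Real.exp (Real.sqrt 2 * (Real.sqrt 2 * t + y)) *
                u t (Real.sqrt 2 * t + y) := by ring
    _ = ∫⁻ y in Ioi (Real.sqrt 2 * t), f y := lint_translate f (Real.sqrt 2 * t)
    _ ≤ ∫⁻ y in Ioi (0:ℝ), f y := lintegral_mono_set (Ioi_subset_Ioi (by positivity))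
    _ < ⊤ := main1
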